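/- Let 𝒱 = {0, 1/n, …, (n−1)/n, 1}, let H be a finite set of CPL-satisfiable L_CPL-terms, and let λ be a PIL whose event belongs to H and whose constant belongs to 𝒱, such that λ is FP-satisfiable and λ^♭_𝒱 is defined and not FP-valid. Then there is no PIL λ' whose event belongs to H and whose constant belongs to 𝒱 such that λ ⊨_FP λ', λ' ⊨_FP λ^♭_𝒱, λ' ⊭_FP λ, and λ^♭_𝒱 ⊭_FP λ'. -/

import Mathlib

open scoped Classical

/-- Classical propositional formulas (the language `L_CPL`), built from
propositional variables (indexed by `ℕ`) using ¬, ∧, ∨. -/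
inductive CPL where
  | var : ℕ → CPL
  | neg : CPL → CPL
  | and : CPL → CPL → CPL
  | or : CPL → CPL → CPL
deriving DecidableEq

namespace CPL

/-- The set of propositional variables occurring in a formula. -/
def vars : CPL → Finset ℕ
  | var p => {p}
  | neg φ => vars φ
  | and φ χ => vars φ ∪ vars χ
  | or φ χ => vars φ ∪ vars χ

/-- Classical evaluation of a formula under a Boolean valuation. -/
def eval (v : ℕ → Bool) : CPL → Bool
  | var p => v p
  | neg φ => !eval v φ
  | and φ χ => eval v φ && eval v χ
  | or φ χ => eval v φ || eval v χ

/-- Evaluation of a formula at a state given as a set of variables: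
the variables in `X` are true, all others false. -/
def evalSet (X : Finset ℕ) (φ : CPL) : Bool := eval (fun p => decide (p ∈ X)) φ

/-- CPL-satisfiability. -/
def Satisfiable (φ : CPL) : Prop := ∃ v, eval v φ = true

/-- CPL-validity. -/
def Valid (φ : CPL) : Prop := ∀ v, eval v φ = true

/-- Classical entailment `φ ⊨_CPL χ`. -/
def Entails (φ χ : CPL) : Prop := ∀ v, eval v φ = true → eval v χ = true

/-- A literal: a variable or a negated variable. -/
def IsLiteral (φ : CPL) : Prop := (∃ p, φ = var p) ∨ ∃ p, φ = neg (var p)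

/-- An `L_CPL`-term: a conjunction of literals. -/
inductive IsTerm : CPL → Prop
  | lit {φ} : IsLiteral φ → IsTerm φ
  | conj {φ χ} : IsTerm φ → IsTerm χ → IsTerm (and φ χ)

/-- A conjunction of propositional variables. -/
inductive IsConjVars : CPL → Prop
  | var (p : ℕ) : IsConjVars (var p)
  | conj {φ χ} : IsConjVars φ → IsConjVars χ → IsConjVars (and φ χ)

/-- A disjunction of propositional variables. -/
inductive IsDisjVars : CPL → Prop
  | var (p : ℕ) : IsDisjVars (var p)
  | disj {φ χ} : IsDisjVars φ → IsDisjVars χ → IsDisjVars (or φ χ)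

/-- Variables occurring as positive literals (in a term). -/
def posVars : CPL → Finset ℕ
  | var p => {p}
  | neg _ => ∅
  | and φ χ => posVars φ ∪ posVars χ
  | or _ _ => ∅

/-- Variables occurring as negated literals (in a term). -/
def negVars : CPL → Finset ℕ
  | var _ => ∅
  | neg (var p) => {p}
  | neg _ => ∅
  | and φ χ => negVars φ ∪ negVars χ
  | or _ _ => ∅

/-- The literals occurring in a term. -/
def lits (φ : CPL) : Finset CPL :=
  (posVars φ).image var ∪ (negVars φ).image (fun p => neg (var p))

end CPL

/-- A state (possible world) over a finite set `V` of variables: a subset of `V`. -/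
abbrev World (V : Finset ℕ) := {X : Finset ℕ // X ⊆ V}

/-- A probabilistic model for `V`: a finitely additive probability measure
`μ : 2^(2^V) → [0,1]`. -/
structure ProbModel (V : Finset ℕ) where
  μ : Set (World V) → ℝ
  nonneg : ∀ A, 0 ≤ μ A
  le_one : ∀ A, μ A ≤ 1
  m_univ : μ Set.univ = 1
  m_empty : μ ∅ = 0
  m_add : ∀ A B : Set (World V), Disjoint A B → μ (A ∪ B) = μ A + μ B

/-- The truth set `‖φ‖_M` of a classical formula in a probabilistic model for `V`. -/
def truthSet (V : Finset ℕ) (φ : CPL) : Set (World V) :=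
  {w | CPL.evalSet w.1 φ = true}

/-- Comparison symbols ◇ ∈ {≤, <, >, ≥}. -/
inductive Ineq where
  | le | lt | gt | ge
deriving DecidableEq

/-- The relation denoted by a comparison symbol. -/
def Ineq.holds : Ineq → ℝ → ℝ → Prop
  | le, x, c => x ≤ c
  | lt, x, c => x < c
  | gt, x, c => x > c
  | ge, x, c => x ≥ c

/-- Formulas of the probabilistic language `L^Q_Pr`, built from probabilistic atoms
`Pr(φ)` and `Pr(φ)◇c̄` using ¬, △, ⊙, ⊕, →. -/
inductive FP where
  | prob : CPL → FP
  | probIneq : CPL → Ineq → ℚ → FP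
  | neg : FP → FP
  | delta : FP → FP
  | conj : FP → FP → FP
  | disj : FP → FP → FP
  | impl : FP → FP → FP
deriving DecidableEq

namespace FP

/-- Well-formedness: all rational constants lie in `[0,1] ∩ ℚ`. -/
def WF : FP → Prop
  | prob _ => True
  | probIneq _ _ c => 0 ≤ c ∧ c ≤ 1
  | neg α => WF α
  | delta α => WF α
  | conj α β => WF α ∧ WF β
  | disj α β => WF α ∧ WF β
  | impl α β => WF α ∧ WF β

/-- The variables of an `L^Q_Pr`-formula. -/
def vars : FP → Finset ℕ
  | prob φ => φ.vars
  | probIneq φ _ _ => φ.vars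
  | neg α => vars α
  | delta α => vars α
  | conj α β => vars α ∪ vars β
  | disj α β => vars α ∪ vars β
  | impl α β => vars α ∪ vars β

/-- The events `E(α)`: the classical formulas occurring in probabilistic atoms of `α`. -/
def events : FP → Finset CPL
  | prob φ => {φ}
  | probIneq φ _ _ => {φ}
  | neg α => events α
  | delta α => events α
  | conj α β => events α ∪ events β
  | disj α β => events α ∪ events β
  | impl α β => events α ∪ events β

/-- The FP-interpretation `I_M` induced by a probabilistic model `M`. -/
noncomputable def interp {V : Finset ℕ} (M : ProbModel V) : FP → ℝ
  | prob φ => M.μ (truthSet V φ)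
  | probIneq φ d c => if d.holds (M.μ (truthSet V φ)) (c : ℝ) then 1 else 0
  | neg α => 1 - interp M α
  | delta α => if interp M α = 1 then 1 else 0
  | conj α β => max 0 (interp M α + interp M β - 1)
  | disj α β => min 1 (interp M α + interp M β)
  | impl α β => min 1 (1 - interp M α + interp M β)

/-- `α` is FP-satisfiable: `I_M(α) = 1` in some probabilistic model for `Var(α)`. -/
def Satisfiable (α : FP) : Prop := ∃ M : ProbModel α.vars, interp M α = 1

/-- `α` is FP-valid: `I_M(α) = 1` in every probabilistic model for `Var(α)`. -/
def Valid (α : FP) : Prop := ∀ M : ProbModel α.vars, interp M α = 1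

/-- `α ⊨_FP β`: `I_M(β) = 1` in every probabilistic model for the variables of
`{α, β}` with `I_M(α) = 1`. -/
def Entails1 (α β : FP) : Prop :=
  ∀ M : ProbModel (α.vars ∪ β.vars), interp M α = 1 → interp M β = 1

/-- The variables of a finite set of `L^Q_Pr`-formulas. -/
def varsSet (Γ : Finset FP) : Finset ℕ := Γ.sup vars

/-- A finite set `Γ` is FP-satisfiable (`Γ ⊭_FP ⊥`): some probabilistic model for
the variables of `Γ` makes every member of `Γ` equal to `1`. -/
def SetSatisfiable (Γ : Finset FP) : Prop :=
  ∃ M : ProbModel (varsSet Γ), ∀ γ ∈ Γ, interp M γ = 1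

/-- `Γ ⊨_FP δ`: every probabilistic model for the variables of `Γ ∪ {δ}` satisfying
all of `Γ` satisfies `δ`. -/
def EntailsFin (Γ : Finset FP) (δ : FP) : Prop :=
  ∀ M : ProbModel (varsSet Γ ∪ δ.vars), (∀ γ ∈ Γ, interp M γ = 1) → interp M δ = 1

/-- `Γ ⊨^cons_FP δ`: `Γ ⊨_FP δ` and `Γ ⊭_FP ⊥`. -/
def ConsEntails (Γ : Finset FP) (δ : FP) : Prop :=
  EntailsFin Γ δ ∧ SetSatisfiable Γ

/-- The set of permitted values `V_Pr(Pr(φ)◇c̄)`. -/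
def permittedValues (φ : CPL) (d : Ineq) (c : ℚ) : Set ℝ :=
  {x | ∃ (V : Finset ℕ) (M : ProbModel V), φ.vars ⊆ V ∧
      interp M (probIneq φ d c) = 1 ∧ M.μ (truthSet V φ) = x}

end FP

/-- Formulas of the Łukasiewicz language `L^Q_Ł`, built from propositional variables
and truth-constant literals `p◇c̄` using ¬, △, ⊙, ⊕, →. -/
inductive Luk where
  | var : ℕ → Luk
  | ineq : ℕ → Ineq → ℚ → Luk
  | neg : Luk → Luk
  | delta : Luk → Luk
  | conj : Luk → Luk → Luk
  | disj : Luk → Luk → Luk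
  | impl : Luk → Luk → Luk
deriving DecidableEq

/-- An Ł-valuation: a function `Var → [0,1]`. -/
structure LukVal where
  v : ℕ → ℝ
  mem : ∀ p, v p ∈ Set.Icc (0 : ℝ) 1

/-- Extension of an Ł-valuation to all `L^Q_Ł`-formulas. -/
noncomputable def LukVal.eval (val : LukVal) : Luk → ℝ
  | .var p => val.v p
  | .ineq p d c => if d.holds (val.v p) (c : ℝ) then 1 else 0
  | .neg φ => 1 - val.eval φ
  | .delta φ => if val.eval φ = 1 then 1 else 0
  | .conj φ χ => max 0 (val.eval φ + val.eval χ - 1)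
  | .disj φ χ => min 1 (val.eval φ + val.eval χ)
  | .impl φ χ => min 1 (1 - val.eval φ + val.eval χ)

namespace Luk

/-- Well-formedness: all rational constants lie in `[0,1] ∩ ℚ`. -/
def WF : Luk → Prop
  | var _ => True
  | ineq _ _ c => 0 ≤ c ∧ c ≤ 1
  | neg φ => WF φ
  | delta φ => WF φ
  | conj φ χ => WF φ ∧ WF χ
  | disj φ χ => WF φ ∧ WF χ
  | impl φ χ => WF φ ∧ WF χ

/-- `Φ ⊨_Ł χ` for a finite set `Φ`. -/
def EntailsFin (Φ : Finset Luk) (χ : Luk) : Prop :=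
  ∀ val : LukVal, (∀ φ ∈ Φ, val.eval φ = 1) → val.eval χ = 1

/-- `φ` is Ł-valid. -/
def ValidL (φ : Luk) : Prop := ∀ val : LukVal, val.eval φ = 1

/-- A set of `L^Q_Ł`-formulas is Ł-satisfiable. -/
def SatisfiableSet (S : Set Luk) : Prop := ∃ val : LukVal, ∀ φ ∈ S, val.eval φ = 1

/-- The probabilistic counterpart `φ^Pr` of a Łukasiewicz formula. -/
def toFP : Luk → FP
  | var p => .prob (.var p)
  | ineq p d c => .probIneq (.var p) d c
  | neg φ => .neg (toFP φ)
  | delta φ => .delta (toFP φ)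
  | conj φ χ => .conj (toFP φ) (toFP χ)
  | disj φ χ => .disj (toFP φ) (toFP χ)
  | impl φ χ => .impl (toFP φ) (toFP χ)

end Luk

namespace FP

/-- The outer counterpart `α^↑` of an `L^Q_Pr`-formula, replacing each atom `Pr(φ)`
by the fresh variable `e φ` (and `Pr(φ)◇c̄` by `(e φ)◇c̄`). -/
def outer (e : CPL → ℕ) : FP → Luk
  | prob φ => .var (e φ)
  | probIneq φ d c => .ineq (e φ) d c
  | neg α => .neg (outer e α)
  | delta α => .delta (outer e α)
  | conj α β => .conj (outer e α) (outer e β)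
  | disj α β => .disj (outer e α) (outer e β)
  | impl α β => .impl (outer e α) (outer e β)

end FP

/-- The ⊙-conjunction of a (nonempty) list of `L^Q_Pr`-formulas. -/
def bigConjFP : List FP → FP
  | [] => .probIneq (.var 0) .ge 0
  | a :: t => t.foldl .conj a

/-- The ∨-disjunction of a (nonempty) list of classical formulas. -/
def bigDisjCPL : List CPL → CPL
  | [] => .var 0
  | a :: t => t.foldl .or a

/-- The PIT `⊙_i Pr(τ_i)≤c̄_i ⊙ ⊙_i Pr(τ_i)≥c̄_i` associated with the list of
pairs `(τ_i, c_i)`. -/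
def completePITFormula (L : List (CPL × ℚ)) : FP :=
  bigConjFP (L.map (fun t => FP.probIneq t.1 .le t.2) ++
             L.map (fun t => FP.probIneq t.1 .ge t.2))

/-- `τ` is an `L_CPL`-term containing, for every `p ∈ V`, exactly one of the
literals `p` and `¬p` (and no other variables). -/
def IsCompleteTermOver (V : Finset ℕ) (τ : CPL) : Prop :=
  CPL.IsTerm τ ∧ τ.vars ⊆ V ∧ ∀ p ∈ V, (p ∈ τ.posVars ↔ p ∉ τ.negVars)

/-- Membership in `𝒱 = {0, 1/n, …, (n−1)/n, 1}`. -/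
def memVSet (n : ℕ) (c : ℚ) : Prop := ∃ k : ℕ, k ≤ n ∧ c = (k : ℚ) / (n : ℚ)

/-- The data `(τ_i, c_i)` of a `⟨V,𝒱⟩`-complete PIT (with `𝒱` given by `n`). -/
def IsCompletePIT (V : Finset ℕ) (n : ℕ) (L : List (CPL × ℚ)) : Prop :=
  (L.map Prod.fst).Nodup ∧
  (∀ t ∈ L, IsCompleteTermOver V t.1 ∧ memVSet n t.2) ∧
  (L.map Prod.snd).sum = 1

/-- A measure is coherent with a value assignment `pr` on the events `E`. -/
def coherent {V : Finset ℕ} (M : ProbModel V) (E : Finset CPL) (pr : CPL → ℚ) : Prop :=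
  ∀ ψ ∈ E, M.μ (truthSet V ψ) = (pr ψ : ℝ)

/-- Conditional probability `Pr_μ(φ | χ) = μ(‖φ∧χ‖)/μ(‖χ‖)`. -/
noncomputable def condProb {V : Finset ℕ} (M : ProbModel V) (φ χ : CPL) : ℝ :=
  M.μ (truthSet V (CPL.and φ χ)) / M.μ (truthSet V χ)

/-- `τ` is a solution to the PrAP `⟨{φ}, χ, H, E, pr⟩`: an `L_CPL`-term composed of
literals from `H` s.t. `φ, τ ⊨_CPL χ` and some probabilistic model coherent with `pr`
gives `μ(‖φ∧τ‖) > 0`. -/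
def IsPrAPSolution (φ χ : CPL) (H E : Finset CPL) (pr : CPL → ℚ) (τ : CPL) : Prop :=
  CPL.IsTerm τ ∧ τ.lits ⊆ H ∧
  (∀ v, CPL.eval v φ = true → CPL.eval v τ = true → CPL.eval v χ = true) ∧
  ∃ M : ProbModel (φ.vars ∪ χ.vars),
    coherent M E pr ∧ 0 < M.μ (truthSet (φ.vars ∪ χ.vars) (CPL.and φ τ))

/-- `τ` is a preferred solution: a solution s.t. for every other solution `σ` there is
a probabilistic model coherent with `pr` with `μ(‖τ‖) ≥ μ(‖σ‖)`. -/
def IsPreferredPrAPSolution (φ χ : CPL) (H E : Finset CPL) (pr : CPL → ℚ) (τ : CPL) : Prop :=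
  IsPrAPSolution φ χ H E pr τ ∧
  ∀ σ, IsPrAPSolution φ χ H E pr σ → σ ≠ τ →
    ∃ M : ProbModel (φ.vars ∪ χ.vars),
      coherent M E pr ∧
      M.μ (truthSet (φ.vars ∪ χ.vars) σ) ≤ M.μ (truthSet (φ.vars ∪ χ.vars) τ)

/-- The FP-counterpart `Ξ_p = {Pr(ψ)≈c̄ : ψ ∈ E, p(ψ) = c}` of a value assignment,
where `Pr(ψ)≈c̄` abbreviates `(Pr(ψ)≥c̄) ⊙ (Pr(ψ)≤c̄)`. -/
def XiP (E : Finset CPL) (pr : CPL → ℚ) : Finset FP :=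
  E.image (fun ψ => FP.conj (FP.probIneq ψ .ge (pr ψ)) (FP.probIneq ψ .le (pr ψ)))

/-- The next weakest PIL `λ^♭_𝒱` of the PIL `Pr(τ)◇(k/n)`. -/
def flatPIL (n : ℕ) (τ : CPL) (d : Ineq) (k : ℕ) : FP :=
  match d with
  | .ge => FP.probIneq τ .gt (((k : ℚ) - 1) / (n : ℚ))
  | .gt => FP.probIneq τ .ge ((k : ℚ) / (n : ℚ))
  | .le => FP.probIneq τ .lt (((k : ℚ) + 1) / (n : ℚ))
  | .lt => FP.probIneq τ .le ((k : ℚ) / (n : ℚ))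

/-- The theory `Ψ_Γ = Γ^↑ ∪ {p_φ → p_χ : φ, χ ∈ E[Γ], φ ⊨_CPL χ}`. -/
def PsiGamma (Γ : Finset FP) (e : CPL → ℕ) : Set Luk :=
  (fun α => FP.outer e α) '' (↑Γ : Set FP) ∪
  {ψ | ∃ φ ∈ Γ.sup FP.events, ∃ χ ∈ Γ.sup FP.events,
        CPL.Entails φ χ ∧ ψ = Luk.impl (.var (e φ)) (.var (e χ))}

/-- The conjunction `hd ∧ ⋀_{q ∈ s} q`. -/
def conjVarsFrom (hd : CPL) (s : Finset ℕ) : CPL :=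
  (s.sort (· ≤ ·)).foldl (fun acc q => CPL.and acc (CPL.var q)) hd
section Stmt17Aux

private lemma s17_eval_congr {φ : CPL} {v v' : ℕ → Bool}
    (h : ∀ p ∈ φ.vars, v p = v' p) : CPL.eval v φ = CPL.eval v' φ := by
  induction φ with
  | var p => exact h p (Finset.mem_singleton_self p)
  | neg φ ih => simp only [CPL.eval]; rw [ih h]
  | and φ χ ih1 ih2 =>
      simp only [CPL.eval]
      rw [ih1 fun p hp => h p (Finset.mem_union_left _ hp),
          ih2 fun p hp => h p (Finset.mem_union_right _ hp)]
  | or φ χ ih1 ih2 =>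
      simp only [CPL.eval]
      rw [ih1 fun p hp => h p (Finset.mem_union_left _ hp),
          ih2 fun p hp => h p (Finset.mem_union_right _ hp)]

noncomputable def s17dirac {V : Finset ℕ} (w : World V) : ProbModel V where
  μ S := if w ∈ S then 1 else 0
  nonneg A := by split <;> norm_num
  le_one A := by split <;> norm_num
  m_univ := by simp
  m_empty := by simp
  m_add A B hAB := by
    by_cases hA : w ∈ A <;> by_cases hB : w ∈ B
    · exact absurd hB (Set.disjoint_left.mp hAB hA)
    · simp [Set.mem_union, hA, hB]
    · simp [Set.mem_union, hA, hB]
    · simp [Set.mem_union, hA, hB]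

private lemma s17dirac_truth {V : Finset ℕ} (w : World V) (φ : CPL) :
    (s17dirac w).μ (truthSet V φ) = if CPL.evalSet w.1 φ = true then 1 else 0 := by
  by_cases h : CPL.evalSet w.1 φ = true <;> simp [s17dirac, truthSet, h]

noncomputable def s17world (V : Finset ℕ) (v : ℕ → Bool) : World V :=
  ⟨V.filter (fun p => v p = true), Finset.filter_subset _ _⟩

private lemma s17evalSet_world {V : Finset ℕ} (v : ℕ → Bool) {φ : CPL}
    (h : φ.vars ⊆ V) : CPL.evalSet (s17world V v).1 φ = CPL.eval v φ := by
  unfold CPL.evalSet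
  apply s17_eval_congr
  intro p hp
  have hpV : p ∈ V := h hp
  cases hv : v p <;> simp [s17world, Finset.mem_filter, hpV, hv]

private lemma s17mono {V : Finset ℕ} (M : ProbModel V) {S T : Set (World V)}
    (h : S ⊆ T) : M.μ S ≤ M.μ T := by
  have hadd := M.m_add S (T \ S) (Set.disjoint_left.mpr fun a ha h2 => h2.2 ha)
  rw [Set.union_diff_cancel h] at hadd
  have h2 := M.nonneg (T \ S)
  linarith

private lemma s17compl {V : Finset ℕ} (M : ProbModel V) (S : Set (World V)) :
    M.μ Sᶜ = 1 - M.μ S := by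
  have hadd := M.m_add S Sᶜ disjoint_compl_right
  rw [Set.union_compl_self, M.m_univ] at hadd
  linarith

private lemma s17truth_eq {U : Finset ℕ} {τ τ' : CPL}
    (h : ∀ v, CPL.eval v τ' = CPL.eval v τ) : truthSet U τ' = truthSet U τ := by
  ext w; simp only [truthSet, Set.mem_setOf_eq, CPL.evalSet, h]

private lemma s17truth_compl {U : Finset ℕ} {τ τ' : CPL}
    (h : ∀ v, CPL.eval v τ' = !CPL.eval v τ) : truthSet U τ' = (truthSet U τ)ᶜ := by
  ext w
  simp only [truthSet, Set.mem_setOf_eq, Set.mem_compl_iff, CPL.evalSet, h]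
  simp

private lemma s17interp {V : Finset ℕ} (M : ProbModel V) (φ : CPL) (dd : Ineq) (q : ℚ) :
    FP.interp M (FP.probIneq φ dd q) = 1 ↔ dd.holds (M.μ (truthSet V φ)) (q : ℝ) := by
  simp only [FP.interp]
  split_ifs with h <;> simp [h]

def s17g : Ineq → Bool
  | .ge => true | .gt => true | .le => false | .lt => false

def s17c : Ineq → Bool
  | .ge => false | .gt => false | .le => true | .lt => true

private lemma s17bad_refute (dd : Ineq) {q y : ℝ} (h0 : 0 ≤ y) (_h1 : y ≤ 1)
    (hq0 : 0 ≤ q) (hq1 : q ≤ 1) (Hn : ¬ dd.holds y q) :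
    ¬ dd.holds (if s17c dd then (1:ℝ) else 0) q := by
  cases dd with
  | ge =>
      have Hn' : ¬ ((q:ℝ) ≤ y) := Hn
      have := not_le.mp Hn'
      show ¬ ((q:ℝ) ≤ 0)
      intro h; linarith
  | gt =>
      show ¬ ((q:ℝ) < 0)
      intro h; linarith
  | le =>
      have Hn' : ¬ (y ≤ q) := Hn
      have := not_le.mp Hn'
      show ¬ ((1:ℝ) ≤ q)
      intro h; linarith
  | lt =>
      show ¬ ((1:ℝ) < q)
      intro h; linarith

private lemma s17goodC (dd : Ineq) {q z : ℝ} (h0 : 0 ≤ z) (h1 : z ≤ 1) (H : dd.holds z q) :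
    dd.holds (if s17c dd then (0:ℝ) else 1) q := by
  cases dd with
  | ge => have H' : q ≤ z := H; show q ≤ (1:ℝ); linarith
  | gt => have H' : q < z := H; show q < (1:ℝ); linarith
  | le => have H' : z ≤ q := H; show (0:ℝ) ≤ q; linarith
  | lt => have H' : z < q := H; show (0:ℝ) < q; linarith

private lemma s17sep (dd : Ineq) {z1 z2 q : ℝ} (H : dd.holds z1 q) (Hn : ¬ dd.holds z2 q) :
    ¬ ((z1 < q ↔ z2 < q) ∧ (z1 ≤ q ↔ z2 ≤ q)) := by
  rintro ⟨hlt, hle⟩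
  cases dd with
  | ge =>
      have H' : q ≤ z1 := H
      have Hn' : ¬ (q ≤ z2) := Hn
      have := hlt.mpr (not_le.mp Hn')
      linarith
  | gt =>
      have H' : q < z1 := H
      have Hn' : ¬ (q < z2) := Hn
      have := hle.mpr (not_lt.mp Hn')
      linarith
  | le =>
      have H' : z1 ≤ q := H
      have Hn' : ¬ (z2 ≤ q) := Hn
      exact Hn' (hle.mp H')
  | lt =>
      have H' : z1 < q := H
      have Hn' : ¬ (z2 < q) := Hn
      exact Hn' (hlt.mp H')

private lemma s17reflect {x1 x2 q : ℝ}
    (h : (x1 < 1 - q ↔ x2 < 1 - q) ∧ (x1 ≤ 1 - q ↔ x2 ≤ 1 - q)) :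
    ((1 - x1 < q ↔ 1 - x2 < q) ∧ (1 - x1 ≤ q ↔ 1 - x2 ≤ q)) := by
  have e : ∀ z : ℝ, (1 - z < q) ↔ ¬ (z ≤ 1 - q) := by
    intro z; rw [not_le]; constructor <;> intro <;> linarith
  have f : ∀ z : ℝ, (1 - z ≤ q) ↔ ¬ (z < 1 - q) := by
    intro z; rw [not_lt]; constructor <;> intro <;> linarith
  exact ⟨by rw [e x1, e x2]; exact not_congr h.2, by rw [f x1, f x2]; exact not_congr h.1⟩

end Stmt17Aux


private lemma s17core (τ τ' : CPL) (d df d' : Ineq) (c cf c' : ℚ)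
    (h1 : FP.Entails1 (FP.probIneq τ d c) (FP.probIneq τ' d' c'))
    (h2 : FP.Entails1 (FP.probIneq τ' d' c') (FP.probIneq τ df cf))
    (h3 : ¬ FP.Entails1 (FP.probIneq τ' d' c') (FP.probIneq τ d c))
    (h4 : ¬ FP.Entails1 (FP.probIneq τ df cf) (FP.probIneq τ' d' c'))
    (hc'0 : (0:ℝ) ≤ (c' : ℝ)) (hc'1 : ((c' : ℝ)) ≤ 1)
    (hgood : d.holds (if s17g d then (1:ℝ) else 0) (c : ℝ))
    (hbadf : ¬ df.holds (if s17g d then (0:ℝ) else 1) (cf : ℝ))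
    (hnogrid : ∀ x1 x2 q : ℝ, df.holds x1 (cf:ℝ) → ¬ d.holds x1 (c:ℝ) →
        df.holds x2 (cf:ℝ) → ¬ d.holds x2 (c:ℝ) →
        (q = (c':ℝ) ∨ q = 1 - (c':ℝ)) →
        ((x1 < q ↔ x2 < q) ∧ (x1 ≤ q ↔ x2 ≤ q))) : False := by
  classical
  simp only [FP.Entails1] at h3 h4
  push_neg at h3 h4
  obtain ⟨M1, hM1a, hM1b⟩ := h3
  obtain ⟨M2, hM2a, hM2b⟩ := h4
  have hy1 : d'.holds (M1.μ (truthSet _ τ')) (c':ℝ) := (s17interp M1 τ' d' c').mp hM1a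
  have hx1f : df.holds (M1.μ (truthSet _ τ)) (cf:ℝ) := (s17interp M1 τ df cf).mp (h2 M1 hM1a)
  have hx1n : ¬ d.holds (M1.μ (truthSet _ τ)) (c:ℝ) := fun h => hM1b ((s17interp M1 τ d c).mpr h)
  have hx2f : df.holds (M2.μ (truthSet _ τ)) (cf:ℝ) := (s17interp M2 τ df cf).mp hM2a
  have hy2n : ¬ d'.holds (M2.μ (truthSet _ τ')) (c':ℝ) := fun h => hM2b ((s17interp M2 τ' d' c').mpr h)
  have hx2n : ¬ d.holds (M2.μ (truthSet _ τ)) (c:ℝ) := fun h =>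
    hy2n ((s17interp M2 τ' d' c').mp (h1 M2 ((s17interp M2 τ d c).mpr h)))
  have hy10 : (0:ℝ) ≤ M1.μ (truthSet _ τ') := M1.nonneg _
  have hy11 : M1.μ (truthSet _ τ') ≤ 1 := M1.le_one _
  have hy20 : (0:ℝ) ≤ M2.μ (truthSet _ τ') := M2.nonneg _
  have hy21 : M2.μ (truthSet _ τ') ≤ 1 := M2.le_one _
  -- Branch 1 : corner (goodside for τ, badside for τ')
  by_cases hC1 : ∃ v : ℕ → Bool, CPL.eval v τ = s17g d ∧ CPL.eval v τ' = s17c d'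
  · obtain ⟨v, hv1, hv2⟩ := hC1
    set U : Finset ℕ := (FP.probIneq τ d c).vars ∪ (FP.probIneq τ' d' c').vars with hU
    set M : ProbModel U := s17dirac (s17world U v) with hM
    have hsub1 : τ.vars ⊆ U := Finset.subset_union_left
    have hsub2 : τ'.vars ⊆ U := Finset.subset_union_right
    have hA : M.μ (truthSet U τ) = if s17g d then (1:ℝ) else 0 := by
      rw [hM, s17dirac_truth, s17evalSet_world v hsub1, hv1]
    have hB : M.μ (truthSet U τ') = if s17c d' then (1:ℝ) else 0 := by
      rw [hM, s17dirac_truth, s17evalSet_world v hsub2, hv2]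
    have hlam : FP.interp M (FP.probIneq τ d c) = 1 :=
      (s17interp M τ d c).mpr (by rw [hA]; exact hgood)
    have hBh : d'.holds (M.μ (truthSet U τ')) (c':ℝ) := (s17interp M τ' d' c').mp (h1 M hlam)
    rw [hB] at hBh
    exact s17bad_refute d' hy20 hy21 hc'0 hc'1 hy2n hBh
  · by_cases hC2 : ∃ v : ℕ → Bool, CPL.eval v τ = !s17g d ∧ CPL.eval v τ' = !s17c d'
    · obtain ⟨v, hv1, hv2⟩ := hC2
      set U : Finset ℕ := (FP.probIneq τ' d' c').vars ∪ (FP.probIneq τ df cf).vars with hU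
      set M : ProbModel U := s17dirac (s17world U v) with hM
      have hsub1 : τ.vars ⊆ U := Finset.subset_union_right
      have hsub2 : τ'.vars ⊆ U := Finset.subset_union_left
      have hA : M.μ (truthSet U τ) = if s17g d then (0:ℝ) else 1 := by
        rw [hM, s17dirac_truth, s17evalSet_world v hsub1, hv1]
        cases s17g d <;> simp
      have hB : M.μ (truthSet U τ') = if s17c d' then (0:ℝ) else 1 := by
        rw [hM, s17dirac_truth, s17evalSet_world v hsub2, hv2]
        cases s17c d' <;> simp
      have hlam' : FP.interp M (FP.probIneq τ' d' c') = 1 :=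
        (s17interp M τ' d' c').mpr (by rw [hB]; exact s17goodC d' hy10 hy11 hy1)
      have hAh : df.holds (M.μ (truthSet U τ)) (cf:ℝ) := (s17interp M τ df cf).mp (h2 M hlam')
      rw [hA] at hAh
      exact hbadf hAh
    · push_neg at hC1 hC2
      have hrel : ∀ v : ℕ → Bool,
          CPL.eval v τ' = (if s17g d = s17c d' then !CPL.eval v τ else CPL.eval v τ) := by
        intro v
        have a1 := hC1 v
        have a2 := hC2 v
        revert a1 a2
        cases hg : s17g d <;> cases hc : s17c d' <;> cases ht : CPL.eval v τ <;>
          cases ht' : CPL.eval v τ' <;> simp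
      by_cases hgc : s17g d = s17c d'
      · have hrel' : ∀ v, CPL.eval v τ' = !CPL.eval v τ := fun v => by
          rw [hrel v, if_pos hgc]
        have e1 : M1.μ (truthSet _ τ') = 1 - M1.μ (truthSet _ τ) := by
          rw [s17truth_compl hrel', s17compl]
        have e2 : M2.μ (truthSet _ τ') = 1 - M2.μ (truthSet _ τ) := by
          rw [s17truth_compl hrel', s17compl]
        have hng := hnogrid _ _ (1 - (c':ℝ)) hx1f hx1n hx2f hx2n (Or.inr rfl)
        refine s17sep d' hy1 hy2n ?_
        rw [e1, e2]
        exact s17reflect hng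
      · have hrel' : ∀ v, CPL.eval v τ' = CPL.eval v τ := fun v => by
          rw [hrel v, if_neg hgc]
        have e1 : M1.μ (truthSet _ τ') = M1.μ (truthSet _ τ) := by rw [s17truth_eq hrel']
        have e2 : M2.μ (truthSet _ τ') = M2.μ (truthSet _ τ) := by rw [s17truth_eq hrel']
        have hng := hnogrid _ _ (c':ℝ) hx1f hx1n hx2f hx2n (Or.inl rfl)
        refine s17sep d' hy1 hy2n ?_
        rw [e1, e2]
        exact hng

/-- Let `𝒱 = {0, 1/n, …, 1}`, `H` a finite set of CPL-satisfiable
`L_CPL`-terms, and `λ = Pr(τ)◇(k/n)` a PIL with event in `H` and constant in `𝒱` such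
that `λ` is FP-satisfiable and `λ^♭_𝒱` is defined and not FP-valid. Then there is no
PIL `λ'` with event in `H` and constant in `𝒱` such that `λ ⊨_FP λ'`, `λ' ⊨_FP λ^♭_𝒱`,
`λ' ⊭_FP λ`, and `λ^♭_𝒱 ⊭_FP λ'`. -/
theorem stmt17 (n : ℕ) (hn : 0 < n) (H : Finset CPL)
    (hH : ∀ σ ∈ H, CPL.IsTerm σ ∧ CPL.Satisfiable σ)
    (τ : CPL) (hτ : τ ∈ H) (d : Ineq) (k : ℕ) (hk : k ≤ n)
    (hdefge : d = .ge → 1 ≤ k) (hdefle : d = .le → k < n)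
    (hsat : FP.Satisfiable (FP.probIneq τ d ((k : ℚ) / (n : ℚ))))
    (hnval : ¬ FP.Valid (flatPIL n τ d k)) :
    ¬ ∃ (τ' : CPL) (d' : Ineq) (k' : ℕ), τ' ∈ H ∧ k' ≤ n ∧
      FP.Entails1 (FP.probIneq τ d ((k : ℚ) / (n : ℚ)))
        (FP.probIneq τ' d' ((k' : ℚ) / (n : ℚ))) ∧
      FP.Entails1 (FP.probIneq τ' d' ((k' : ℚ) / (n : ℚ))) (flatPIL n τ d k) ∧
      ¬ FP.Entails1 (FP.probIneq τ' d' ((k' : ℚ) / (n : ℚ)))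
        (FP.probIneq τ d ((k : ℚ) / (n : ℚ))) ∧
      ¬ FP.Entails1 (flatPIL n τ d k) (FP.probIneq τ' d' ((k' : ℚ) / (n : ℚ))) := by
  
  rintro ⟨τ', d', k', -, hk'n, h1, h2, h3, h4⟩
  have hn0 : (0:ℝ) < (n:ℝ) := by exact_mod_cast hn
  have hcast : (((k:ℚ)/(n:ℚ) : ℚ) : ℝ) = (k:ℝ)/(n:ℝ) := by push_cast; ring
  have hcast' : (((k':ℚ)/(n:ℚ) : ℚ) : ℝ) = (k':ℝ)/(n:ℝ) := by push_cast; ring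
  have hcastm : ((((k:ℚ)-1)/(n:ℚ) : ℚ) : ℝ) = ((k:ℝ)-1)/(n:ℝ) := by push_cast; ring
  have hcastp : ((((k:ℚ)+1)/(n:ℚ) : ℚ) : ℝ) = ((k:ℝ)+1)/(n:ℝ) := by push_cast; ring
  have hc'0 : (0:ℝ) ≤ (((k':ℚ)/(n:ℚ) : ℚ) : ℝ) := by rw [hcast']; positivity
  have hc'1 : (((k':ℚ)/(n:ℚ) : ℚ) : ℝ) ≤ 1 := by
    rw [hcast', div_le_one hn0]; exact_mod_cast hk'n
  obtain ⟨M0, hM0⟩ := hsat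
  have hx0 : d.holds (M0.μ (truthSet _ τ)) (((k:ℚ)/(n:ℚ) : ℚ) : ℝ) :=
    (s17interp M0 τ d _).mp hM0
  have hx00 : (0:ℝ) ≤ M0.μ (truthSet _ τ) := M0.nonneg _
  have hx01 : M0.μ (truthSet _ τ) ≤ 1 := M0.le_one _
  simp only [FP.Valid, not_forall] at hnval
  obtain ⟨M5, hM5⟩ := hnval
  have hx50 : (0:ℝ) ≤ M5.μ (truthSet _ τ) := M5.nonneg (truthSet _ τ)
  have hx51 : M5.μ (truthSet _ τ) ≤ 1 := M5.le_one (truthSet _ τ)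
  cases d with
  | ge =>
    have h5 : ¬ Ineq.gt.holds (M5.μ (truthSet _ τ)) ((((k:ℚ)-1)/(n:ℚ) : ℚ) : ℝ) :=
      fun h => hM5 ((s17interp M5 τ .gt _).mpr h)
    have h5' : M5.μ (truthSet _ τ) ≤ ((k:ℝ)-1)/(n:ℝ) := by
      rw [← hcastm]; exact not_lt.mp h5
    refine s17core τ τ' .ge .gt d' ((k:ℚ)/(n:ℚ)) (((k:ℚ)-1)/(n:ℚ)) ((k':ℚ)/(n:ℚ))
      h1 h2 h3 h4 hc'0 hc'1 ?_ ?_ ?_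
    · show (((k:ℚ)/(n:ℚ) : ℚ) : ℝ) ≤ 1
      rw [hcast, div_le_one hn0]; exact_mod_cast hk
    · show ¬ ((((k:ℚ)-1)/(n:ℚ) : ℚ) : ℝ) < 0
      rw [hcastm]; intro h; linarith
    · intro x1 x2 q hf1 hn1 hf2 hn2 hq
      have gf1 : ((k:ℝ)-1)/(n:ℝ) < x1 := by
        have : ((((k:ℚ)-1)/(n:ℚ) : ℚ) : ℝ) < x1 := hf1
        rwa [hcastm] at this
      have gn1 : x1 < (k:ℝ)/(n:ℝ) := by
        have : ¬ ((((k:ℚ)/(n:ℚ) : ℚ) : ℝ) ≤ x1) := hn1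
        rw [hcast] at this; exact not_le.mp this
      have gf2 : ((k:ℝ)-1)/(n:ℝ) < x2 := by
        have : ((((k:ℚ)-1)/(n:ℚ) : ℚ) : ℝ) < x2 := hf2
        rwa [hcastm] at this
      have gn2 : x2 < (k:ℝ)/(n:ℝ) := by
        have : ¬ ((((k:ℚ)/(n:ℚ) : ℚ) : ℝ) ≤ x2) := hn2
        rw [hcast] at this; exact not_le.mp this
      have hqout : q ≤ ((k:ℝ)-1)/(n:ℝ) ∨ (k:ℝ)/(n:ℝ) ≤ q := by
        rcases hq with rfl | rfl
        · rw [hcast']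
          rcases le_or_gt k k' with h | h
          · right; have hh : (k:ℝ) ≤ (k':ℝ) := by exact_mod_cast h
            rw [div_le_div_iff_of_pos_right hn0]; linarith
          · left; have hh : (k':ℝ) + 1 ≤ (k:ℝ) := by exact_mod_cast h
            rw [div_le_div_iff_of_pos_right hn0]; linarith
        · rw [hcast']
          have e : 1 - (k':ℝ)/(n:ℝ) = ((n:ℝ) - k')/(n:ℝ) := by field_simp
          rcases le_or_gt (k + k') n with h | h
          · right; have hh : (k:ℝ) + (k':ℝ) ≤ (n:ℝ) := by exact_mod_cast h
            rw [e, div_le_div_iff_of_pos_right hn0]; linarith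
          · left; have hh : (n:ℝ) + 1 ≤ (k:ℝ) + (k':ℝ) := by exact_mod_cast h
            rw [e, div_le_div_iff_of_pos_right hn0]; linarith
      constructor
      · constructor <;> intro hh <;> rcases hqout with h | h <;> linarith
      · constructor <;> intro hh <;> rcases hqout with h | h <;> linarith
  | gt =>
    have hx0' : (((k:ℚ)/(n:ℚ) : ℚ) : ℝ) < M0.μ (truthSet _ τ) := hx0
    have h5 : ¬ Ineq.ge.holds (M5.μ (truthSet _ τ)) (((k:ℚ)/(n:ℚ) : ℚ) : ℝ) :=
      fun h => hM5 ((s17interp M5 τ .ge _).mpr h)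
    have h5' : M5.μ (truthSet _ τ) < (((k:ℚ)/(n:ℚ) : ℚ) : ℝ) := not_le.mp h5
    refine s17core τ τ' .gt .ge d' ((k:ℚ)/(n:ℚ)) ((k:ℚ)/(n:ℚ)) ((k':ℚ)/(n:ℚ))
      h1 h2 h3 h4 hc'0 hc'1 ?_ ?_ ?_
    · show (((k:ℚ)/(n:ℚ) : ℚ) : ℝ) < 1
      linarith
    · show ¬ ((((k:ℚ)/(n:ℚ) : ℚ) : ℝ) ≤ 0)
      intro h; linarith
    · intro x1 x2 q hf1 hn1 hf2 hn2 _
      have gf1 : (((k:ℚ)/(n:ℚ) : ℚ) : ℝ) ≤ x1 := hf1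
      have gn1 : x1 ≤ (((k:ℚ)/(n:ℚ) : ℚ) : ℝ) := not_lt.mp hn1
      have gf2 : (((k:ℚ)/(n:ℚ) : ℚ) : ℝ) ≤ x2 := hf2
      have gn2 : x2 ≤ (((k:ℚ)/(n:ℚ) : ℚ) : ℝ) := not_lt.mp hn2
      constructor
      · constructor <;> intro hh <;> linarith
      · constructor <;> intro hh <;> linarith
  | le =>
    have h5 : ¬ Ineq.lt.holds (M5.μ (truthSet _ τ)) ((((k:ℚ)+1)/(n:ℚ) : ℚ) : ℝ) :=
      fun h => hM5 ((s17interp M5 τ .lt _).mpr h)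
    have h5' : ((k:ℝ)+1)/(n:ℝ) ≤ M5.μ (truthSet _ τ) := by
      rw [← hcastp]; exact not_lt.mp h5
    refine s17core τ τ' .le .lt d' ((k:ℚ)/(n:ℚ)) (((k:ℚ)+1)/(n:ℚ)) ((k':ℚ)/(n:ℚ))
      h1 h2 h3 h4 hc'0 hc'1 ?_ ?_ ?_
    · show (0:ℝ) ≤ (((k:ℚ)/(n:ℚ) : ℚ) : ℝ)
      rw [hcast]; positivity
    · show ¬ ((1:ℝ) < ((((k:ℚ)+1)/(n:ℚ) : ℚ) : ℝ))
      rw [hcastp]; intro h; linarith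
    · intro x1 x2 q hf1 hn1 hf2 hn2 hq
      have gf1 : x1 < ((k:ℝ)+1)/(n:ℝ) := by
        have : x1 < ((((k:ℚ)+1)/(n:ℚ) : ℚ) : ℝ) := hf1
        rwa [hcastp] at this
      have gn1 : (k:ℝ)/(n:ℝ) < x1 := by
        have : ¬ (x1 ≤ (((k:ℚ)/(n:ℚ) : ℚ) : ℝ)) := hn1
        rw [hcast] at this; exact not_le.mp this
      have gf2 : x2 < ((k:ℝ)+1)/(n:ℝ) := by
        have : x2 < ((((k:ℚ)+1)/(n:ℚ) : ℚ) : ℝ) := hf2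
        rwa [hcastp] at this
      have gn2 : (k:ℝ)/(n:ℝ) < x2 := by
        have : ¬ (x2 ≤ (((k:ℚ)/(n:ℚ) : ℚ) : ℝ)) := hn2
        rw [hcast] at this; exact not_le.mp this
      have hqout : q ≤ (k:ℝ)/(n:ℝ) ∨ ((k:ℝ)+1)/(n:ℝ) ≤ q := by
        rcases hq with rfl | rfl
        · rw [hcast']
          rcases le_or_gt (k+1) k' with h | h
          · right; have hh : (k:ℝ) + 1 ≤ (k':ℝ) := by exact_mod_cast h
            rw [div_le_div_iff_of_pos_right hn0]; linarith
          · left; have hh : (k':ℝ) ≤ (k:ℝ) := by exact_mod_cast Nat.lt_succ_iff.mp h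
            rw [div_le_div_iff_of_pos_right hn0]; linarith
        · rw [hcast']
          have e : 1 - (k':ℝ)/(n:ℝ) = ((n:ℝ) - k')/(n:ℝ) := by field_simp
          rcases le_or_gt (k + k' + 1) n with h | h
          · right; have hh : (k:ℝ) + (k':ℝ) + 1 ≤ (n:ℝ) := by exact_mod_cast h
            rw [e, div_le_div_iff_of_pos_right hn0]; linarith
          · left; have hh : (n:ℝ) ≤ (k:ℝ) + (k':ℝ) := by
              exact_mod_cast Nat.lt_succ_iff.mp h
            rw [e, div_le_div_iff_of_pos_right hn0]; linarith
      constructor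
      · constructor <;> intro hh <;> rcases hqout with h | h <;> linarith
      · constructor <;> intro hh <;> rcases hqout with h | h <;> linarith
  | lt =>
    have hx0' : M0.μ (truthSet _ τ) < (((k:ℚ)/(n:ℚ) : ℚ) : ℝ) := hx0
    have h5 : ¬ Ineq.le.holds (M5.μ (truthSet _ τ)) (((k:ℚ)/(n:ℚ) : ℚ) : ℝ) :=
      fun h => hM5 ((s17interp M5 τ .le _).mpr h)
    have h5' : (((k:ℚ)/(n:ℚ) : ℚ) : ℝ) < M5.μ (truthSet _ τ) := not_le.mp h5
    refine s17core τ τ' .lt .le d' ((k:ℚ)/(n:ℚ)) ((k:ℚ)/(n:ℚ)) ((k':ℚ)/(n:ℚ))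
      h1 h2 h3 h4 hc'0 hc'1 ?_ ?_ ?_
    · show (0:ℝ) < (((k:ℚ)/(n:ℚ) : ℚ) : ℝ)
      linarith
    · show ¬ ((1:ℝ) ≤ (((k:ℚ)/(n:ℚ) : ℚ) : ℝ))
      intro h; linarith
    · intro x1 x2 q hf1 hn1 hf2 hn2 _
      have gf1 : x1 ≤ (((k:ℚ)/(n:ℚ) : ℚ) : ℝ) := hf1
      have gn1 : (((k:ℚ)/(n:ℚ) : ℚ) : ℝ) ≤ x1 := not_lt.mp hn1
      have gf2 : x2 ≤ (((k:ℚ)/(n:ℚ) : ℚ) : ℝ) := hf2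
      have gn2 : (((k:ℚ)/(n:ℚ) : ℚ) : ℝ) ≤ x2 := not_lt.mp hn2
      constructor
      · constructor <;> intro hh <;> linarith
      · constructor <;> intro hh <;> linarith
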